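/- Let A ⊆ B be an extension of commutative rings, J an ideal of B, and X₁, …, X_r finitely many indeterminates over B. Consider the subring R := A + (X₁,…,X_r)J[X₁,…,X_r] of B[X₁,…,X_r], consisting of those polynomials whose constant term lies in A and all of whose other coefficients lie in J. Then R is a Noetherian ring if and only if A is a Noetherian ring, J is an idempotent ideal of B (J² = J), and J is finitely generated as an A-module. -/

import Mathlib

/-- The subring `A + (X₁,…,X_r)J[X₁,…,X_r]` of `B[X₁,…,X_r]`: polynomials whose
constant term lies in the subring `A` and all of whose other coefficients lie in
the ideal `J` of `B`. -/
def polyAmalg {B : Type*} [CommRing B] (A : Subring B) (J : Ideal B) (r : ℕ) :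
    Subring (MvPolynomial (Fin r) B) where
  carrier := {h | h.coeff 0 ∈ A ∧ ∀ m : Fin r →₀ ℕ, m ≠ 0 → h.coeff m ∈ J}
  one_mem' := by
    refine ⟨by simp only [MvPolynomial.coeff_zero_one]; exact A.one_mem, fun m hm => ?_⟩
    rw [MvPolynomial.coeff_one, if_neg (fun h => hm h.symm)]
    exact J.zero_mem
  zero_mem' := ⟨by rw [MvPolynomial.coeff_zero]; exact A.zero_mem, fun m _ => by simp⟩
  mul_mem' := by
    rintro p q ⟨hp0, hp⟩ ⟨hq0, hq⟩
    constructor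
    · rw [MvPolynomial.coeff_mul, Finsupp.antidiagonal_zero, Finset.sum_singleton]
      exact A.mul_mem hp0 hq0
    · intro m hm
      rw [MvPolynomial.coeff_mul]
      refine Ideal.sum_mem J ?_
      rintro ⟨m₁, m₂⟩ hmem
      rw [Finset.HasAntidiagonal.mem_antidiagonal] at hmem
      by_cases h₁ : m₁ = 0
      · have h₂ : m₂ ≠ 0 := by
          intro h₂; exact hm (by rw [← hmem, h₁, h₂, add_zero])
        exact Ideal.mul_mem_left J _ (hq m₂ h₂)
      · exact Ideal.mul_mem_right _ J (hp m₁ h₁)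
  add_mem' := by
    rintro p q ⟨hp0, hp⟩ ⟨hq0, hq⟩
    exact ⟨by rw [MvPolynomial.coeff_add]; exact A.add_mem hp0 hq0,
      fun m hm => by rw [MvPolynomial.coeff_add]; exact J.add_mem (hp m hm) (hq m hm)⟩
  neg_mem' := by
    rintro p ⟨hp0, hp⟩
    exact ⟨by rw [MvPolynomial.coeff_neg]; exact A.neg_mem hp0,
      fun m hm => by rw [MvPolynomial.coeff_neg]; exact J.neg_mem (hp m hm)⟩


open MvPolynomial in
lemma mem_polyAmalg_iff {B : Type*} [CommRing B] (A : Subring B) (J : Ideal B) (r : ℕ)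
    (h : MvPolynomial (Fin r) B) :
    h ∈ polyAmalg A J r ↔ h.coeff 0 ∈ A ∧ ∀ m : Fin r →₀ ℕ, m ≠ 0 → h.coeff m ∈ J := Iff.rfl

open MvPolynomial in
lemma memC_polyAmalg {B : Type*} [CommRing B] (A : Subring B) (J : Ideal B) (r : ℕ)
    {a : B} (ha : a ∈ A) : (C a : MvPolynomial (Fin r) B) ∈ polyAmalg A J r := by
  rw [mem_polyAmalg_iff]
  refine ⟨by simpa using ha, fun m hm => ?_⟩
  rw [coeff_C, if_neg (fun h => hm h.symm)]
  exact J.zero_mem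

open MvPolynomial in
lemma mem_monomial_polyAmalg {B : Type*} [CommRing B] (A : Subring B) (J : Ideal B) (r : ℕ)
    {m : Fin r →₀ ℕ} (hm : m ≠ 0) {b : B} (hb : b ∈ J) :
    (monomial m b : MvPolynomial (Fin r) B) ∈ polyAmalg A J r := by
  rw [mem_polyAmalg_iff]
  constructor
  · rw [coeff_monomial, if_neg hm]; exact A.zero_mem
  · intro m' _
    rw [coeff_monomial]
    split_ifs
    · exact hb
    · exact J.zero_mem

lemma split_single {r : ℕ} (i : Fin r) (m₁ m₂ : Fin r →₀ ℕ)
    (h : m₁ + m₂ = Finsupp.single i 1) : m₁ = 0 ∨ m₂ = 0 := by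
  by_contra hc
  push_neg at hc
  obtain ⟨h1, h2⟩ := hc
  obtain ⟨a, ha⟩ : ∃ a, m₁ a ≠ 0 := by
    by_contra hc'; push_neg at hc'; exact h1 (Finsupp.ext hc')
  obtain ⟨b, hb⟩ : ∃ b, m₂ b ≠ 0 := by
    by_contra hc'; push_neg at hc'; exact h2 (Finsupp.ext hc')
  have hA := DFunLike.congr_fun h a
  have hB := DFunLike.congr_fun h b
  have hI := DFunLike.congr_fun h i
  simp only [Finsupp.add_apply, Finsupp.single_apply] at hA hB hI
  by_cases hia : i = a
  · by_cases hib : i = b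
    · subst hia; subst hib; simp at hA hB hI; omega
    · rw [if_neg hib] at hB; omega
  · rw [if_neg hia] at hA; omega

open MvPolynomial in
/-- Key coefficient-extraction lemma. -/
lemma coeff_span_polyAmalg {B : Type*} [CommRing B] (A : Subring B) (J : Ideal B) (r : ℕ)
    (S : Set ↥(polyAmalg A J r)) (m : Fin r →₀ ℕ) (M : Submodule A B)
    (hS0 : ∀ s ∈ S, ((s : ↥(polyAmalg A J r)) : MvPolynomial (Fin r) B).coeff 0 = 0)
    (hSm : ∀ s ∈ S, ((s : ↥(polyAmalg A J r)) : MvPolynomial (Fin r) B).coeff m ∈ M)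
    (hJJ : ∀ m₁ m₂ : Fin r →₀ ℕ, m₁ + m₂ = m → m₁ ≠ 0 → m₂ ≠ 0 →
      ∀ x ∈ J, ∀ y ∈ J, x * y ∈ M)
    {q : ↥(polyAmalg A J r)} (hq : q ∈ Ideal.span S) :
    ((q : MvPolynomial (Fin r) B)).coeff 0 = 0 ∧
      ((q : MvPolynomial (Fin r) B)).coeff m ∈ M := by
  induction hq using Submodule.span_induction with
  | mem s hs => exact ⟨hS0 s hs, hSm s hs⟩
  | zero => simp
  | add x y hx hy ihx ihy =>
    have hco : (((x + y) : ↥(polyAmalg A J r)) : MvPolynomial (Fin r) B) = ↑x + ↑y := rfl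
    constructor
    · rw [hco, coeff_add, ihx.1, ihy.1, add_zero]
    · rw [hco, coeff_add]; exact M.add_mem ihx.2 ihy.2
  | smul c q hq ih =>
    rw [smul_eq_mul]
    have hco : (((c * q : ↥(polyAmalg A J r))) : MvPolynomial (Fin r) B) = ↑c * ↑q := rfl
    constructor
    · rw [hco, coeff_mul, Finsupp.antidiagonal_zero, Finset.sum_singleton, ih.1, mul_zero]
    · rw [hco, coeff_mul]
      refine M.sum_mem ?_
      rintro ⟨m₁, m₂⟩ hmem
      rw [Finset.HasAntidiagonal.mem_antidiagonal] at hmem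
      by_cases h1 : m₁ = 0
      · have hm2 : m₂ = m := by rw [← hmem, h1, zero_add]
        have hc0 : ((c : MvPolynomial (Fin r) B)).coeff 0 ∈ A :=
          ((mem_polyAmalg_iff A J r _).mp c.2).1
        rw [h1, hm2]
        exact M.smul_mem ⟨_, hc0⟩ ih.2
      · by_cases h2 : m₂ = 0
        · rw [h2, ih.1, mul_zero]; exact M.zero_mem
        · exact hJJ m₁ m₂ hmem h1 h2 _ (((mem_polyAmalg_iff A J r _).mp c.2).2 m₁ h1)
            _ (((mem_polyAmalg_iff A J r _).mp q.2).2 m₂ h2)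

open MvPolynomial

theorem statement13 {B : Type*} [CommRing B] (A : Subring B) (J : Ideal B) (r : ℕ)
    (hr : 0 < r) :
    IsNoetherianRing ↥(polyAmalg A J r) ↔
      IsNoetherianRing A ∧ J * J = J ∧ (Submodule.restrictScalars A J).FG := by
  classical
  set R := polyAmalg A J r with hR
  set i₀ : Fin r := ⟨0, hr⟩ with hi₀
  constructor
  · intro h
    refine ⟨?_, ?_, ?_⟩
    · -- A is Noetherian
      refine isNoetherianRing_of_surjective ↥R ↥A
        (RingHom.codRestrict ((constantCoeff).comp R.subtype) A
          (fun x => by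
            have := ((mem_polyAmalg_iff A J r _).mp x.2).1
            simpa [MvPolynomial.constantCoeff_eq] using this)) ?_
      intro a
      refine ⟨⟨C (a : B), memC_polyAmalg A J r a.2⟩, Subtype.ext ?_⟩
      simp [RingHom.codRestrict]
    · -- J * J = J
      refine le_antisymm Ideal.mul_le_left ?_
      intro a ha
      set p : ℕ → ↥R := fun k =>
        ⟨monomial (Finsupp.single i₀ (k + 1)) a,
          mem_monomial_polyAmalg A J r (by simp [Finsupp.single_eq_zero]) ha⟩ with hp
      set f : ℕ →o Ideal ↥R :=
        ⟨fun n => Ideal.span (p '' Set.Iio n),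
          fun n n' hnn' => Ideal.span_mono (Set.image_mono (Set.Iio_subset_Iio hnn'))⟩
        with hf
      obtain ⟨N, hN⟩ := monotone_stabilizes_iff_noetherian.mpr (isNoetherianRing_iff.mp h) f
      have hpN : p N ∈ Ideal.span (p '' Set.Iio N) := by
        have h1 : p N ∈ f (N + 1) := Ideal.subset_span ⟨N, by simp, rfl⟩
        rwa [← hN (N + 1) (Nat.le_succ N)] at h1
      have key := coeff_span_polyAmalg A J r (p '' Set.Iio N) (Finsupp.single i₀ (N + 1))
        (Submodule.restrictScalars A (J * J))
        (by
          rintro s ⟨k, _, rfl⟩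
          simp [hp, coeff_monomial, Finsupp.single_eq_zero])
        (by
          rintro s ⟨k, hk, rfl⟩
          have hne : Finsupp.single i₀ (k + 1) ≠ Finsupp.single i₀ (N + 1) := by
            intro heq
            have := DFunLike.congr_fun heq i₀
            simp [Finsupp.single_apply] at this
            simp only [Set.mem_Iio] at hk
            omega
          show (((p k : ↥R)) : MvPolynomial (Fin r) B).coeff _ ∈ _
          rw [hp]
          show (monomial (Finsupp.single i₀ (k + 1)) a).coeff (Finsupp.single i₀ (N + 1)) ∈ _
          rw [coeff_monomial, if_neg hne]
          exact Submodule.zero_mem _)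
        (fun m₁ m₂ _ _ _ x hx y hy => Ideal.mul_mem_mul hx hy)
        hpN
      have heq : ((p N : ↥R) : MvPolynomial (Fin r) B).coeff (Finsupp.single i₀ (N + 1)) = a := by
        rw [hp]
        show (monomial (Finsupp.single i₀ (N + 1)) a).coeff (Finsupp.single i₀ (N + 1)) = a
        rw [coeff_monomial, if_pos rfl]
      rw [heq] at key
      exact key.2
    · -- J is f.g. as an A-module
      set m₀ : Fin r →₀ ℕ := Finsupp.single i₀ 1 with hm₀def
      have hm₀ : m₀ ≠ 0 := by simp [hm₀def, Finsupp.single_eq_zero]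
      set I : Ideal ↥R := RingHom.ker ((constantCoeff).comp R.subtype) with hI
      have hmemI : ∀ s : ↥R, s ∈ I ↔ ((s : ↥R) : MvPolynomial (Fin r) B).coeff 0 = 0 := by
        intro s
        rw [hI, RingHom.mem_ker]
        simp [MvPolynomial.constantCoeff_eq]
      obtain ⟨SF, hSF⟩ := (isNoetherianRing_iff_ideal_fg _).mp h I
      set T : Finset B := SF.image (fun f => ((f : ↥R) : MvPolynomial (Fin r) B).coeff m₀)
        with hT
      have hclaim : Submodule.restrictScalars A J = Submodule.span ↥A (↑T : Set B) := by
        refine le_antisymm ?_ ?_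
        · intro a ha
          have hq : (⟨monomial m₀ a, mem_monomial_polyAmalg A J r hm₀ ha⟩ : ↥R) ∈
              Ideal.span (↑SF : Set ↥R) := by
            rw [hSF, hmemI]
            show (monomial m₀ a).coeff 0 = 0
            rw [coeff_monomial, if_neg hm₀]
          have key := coeff_span_polyAmalg A J r (↑SF : Set ↥R) m₀
            (Submodule.span ↥A (↑T : Set B))
            (fun s hs => (hmemI s).mp (hSF ▸ Ideal.subset_span hs))
            (fun s hs => Submodule.subset_span (by
              rw [hT]
              exact Finset.mem_coe.mpr (Finset.mem_image_of_mem _ hs)))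
            (by
              intro m₁ m₂ hsum h1 h2
              rcases split_single i₀ m₁ m₂ hsum with h | h
              · exact absurd h h1
              · exact absurd h h2)
            hq
          have : (monomial m₀ a).coeff m₀ = a := by rw [coeff_monomial, if_pos rfl]
          rw [show ((⟨monomial m₀ a, mem_monomial_polyAmalg A J r hm₀ ha⟩ : ↥R) :
            MvPolynomial (Fin r) B) = monomial m₀ a from rfl, this] at key
          exact key.2
        · rw [Submodule.span_le]
          intro b hb
          rw [hT, Finset.coe_image] at hb
          obtain ⟨g, hg, rfl⟩ := hb
          exact ((mem_polyAmalg_iff A J r _).mp g.2).2 m₀ hm₀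
      rw [hclaim]
      exact ⟨T, rfl⟩
  · rintro ⟨hA, hJ2, hFG⟩
    haveI := hA
    obtain ⟨s, hs⟩ := hFG
    have hsJ : ∀ x ∈ s, x ∈ J := by
      intro x hx
      have hx' : x ∈ Submodule.span ↥A (↑s : Set B) := Submodule.subset_span hx
      rw [hs] at hx'
      exact hx'
    have hJfg : J.FG := by
      refine ⟨s, le_antisymm (Ideal.span_le.mpr hsJ) ?_⟩
      intro x hx
      have hx' : x ∈ Submodule.span ↥A (↑s : Set B) := by rw [hs]; exact hx
      exact Submodule.span_le_restrictScalars ↥A B (↑s : Set B) hx'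
    obtain ⟨e, heJ, he⟩ := Submodule.exists_mem_and_smul_eq_self_of_fg_of_le_smul J
      (J : Ideal B) hJfg (by
        show J ≤ J • J
        exact le_of_eq (by rw [show (J • J : Ideal B) = J * J from rfl, hJ2]))
    have he' : ∀ x ∈ J, e * x = x := fun x hx => by
      have := he x hx; rwa [smul_eq_mul] at this
    have hCeX : ∀ i : Fin r, (C e * X i : MvPolynomial (Fin r) B) ∈ R := by
      intro i
      have : (C e * X i : MvPolynomial (Fin r) B) = monomial (Finsupp.single i 1) e := by
        rw [X, C_mul_monomial, mul_one]
      rw [this]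
      exact mem_monomial_polyAmalg A J r (by simp [Finsupp.single_eq_zero]) heJ
    let ρ : ↥A →+* ↥R :=
      { toFun := fun a => ⟨C (a : B), memC_polyAmalg A J r a.2⟩
        map_one' := Subtype.ext (by simp)
        map_mul' := fun a b => Subtype.ext (by
          show (C ((a : B) * (b : B)) : MvPolynomial (Fin r) B) = C (a : B) * C (b : B)
          rw [map_mul])
        map_zero' := Subtype.ext (by simp)
        map_add' := fun a b => Subtype.ext (by
          show (C ((a : B) + (b : B)) : MvPolynomial (Fin r) B) = C (a : B) + C (b : B)
          rw [map_add]) }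
    letI : Algebra ↥A ↥R := ρ.toAlgebra
    set g : Fin r × Option {x // x ∈ s} → ↥R := fun z =>
      match z.2 with
      | none => ⟨C e * X z.1, hCeX z.1⟩
      | some x => ⟨monomial (Finsupp.single z.1 1) (x : B),
          mem_monomial_polyAmalg A J r (by simp [Finsupp.single_eq_zero]) (hsJ _ x.2)⟩
      with hg
    set G : Set ↥R := Set.range g with hG
    -- the strong-induction claim: monomials with coefficient in `s` lie in the adjoin
    have hgen : ∀ (n : ℕ) (m : Fin r →₀ ℕ) (hm : m ≠ 0), (m.sum fun _ k => k) ≤ n →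
        ∀ x (hx : x ∈ s),
        (⟨monomial m x, mem_monomial_polyAmalg A J r hm (hsJ x hx)⟩ : ↥R) ∈
          Algebra.adjoin ↥A G := by
      intro n
      induction n with
      | zero =>
        intro m hm hdeg x hx
        exfalso
        apply hm
        have hz : (m.sum fun _ k => k) = 0 := Nat.le_zero.mp hdeg
        rw [Finsupp.sum] at hz
        ext i
        by_cases hi : i ∈ m.support
        · exact (Finset.sum_eq_zero_iff.mp hz) i hi
        · simpa using Finsupp.notMem_support_iff.mp hi
      | succ n ih =>
        intro m hm hdeg x hx
        obtain ⟨i, hi⟩ : ∃ i, m i ≠ 0 := by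
          by_contra hc; push_neg at hc; exact hm (Finsupp.ext hc)
        set m' : Fin r →₀ ℕ := m - Finsupp.single i 1 with hm'def
        have hsplit : Finsupp.single i 1 + m' = m := by
          ext j
          rw [hm'def]
          simp only [Finsupp.add_apply, Finsupp.tsub_apply, Finsupp.single_apply]
          split_ifs with hij
          · subst hij
            have : m i ≠ 0 := hi
            omega
          · omega
        by_cases hm'0 : m' = 0
        · have hmeq : m = Finsupp.single i 1 := by rw [← hsplit, hm'0, add_zero]
          refine Algebra.subset_adjoin ⟨(i, some ⟨x, hx⟩), ?_⟩
          exact Subtype.ext (by rw [hg]; show monomial (Finsupp.single i 1) x = monomial m x; rw [hmeq])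
        · have hdegsum : (m.sum fun _ k => k) = 1 + (m'.sum fun _ k => k) := by
            rw [← hsplit, Finsupp.sum_add_index' (fun _ => rfl) (fun _ _ _ => rfl),
              Finsupp.sum_single_index rfl]
          have hdeg' : (m'.sum fun _ k => k) ≤ n := by omega
          have hstep := ih m' hm'0 hdeg' x hx
          have hmul : (⟨C e * X i, hCeX i⟩ : ↥R) *
              ⟨monomial m' x, mem_monomial_polyAmalg A J r hm'0 (hsJ x hx)⟩ =
              ⟨monomial m x, mem_monomial_polyAmalg A J r hm (hsJ x hx)⟩ := by
            apply Subtype.ext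
            show (C e * X i) * monomial m' x = monomial m x
            rw [show (C e * X i : MvPolynomial (Fin r) B) = monomial (Finsupp.single i 1) e by
              rw [X, C_mul_monomial, mul_one], monomial_mul, hsplit, he' x (hsJ x hx)]
          rw [← hmul]
          exact mul_mem (Algebra.subset_adjoin ⟨(i, none), rfl⟩) hstep
    haveI : Algebra.FiniteType ↥A ↥R := by
      refine ⟨(Subalgebra.fg_def).mpr ⟨G, Set.finite_range g, ?_⟩⟩
      rw [eq_top_iff]
      rintro ⟨hpoly, hmem⟩ -
      obtain ⟨h0, hJm⟩ := (mem_polyAmalg_iff A J r hpoly).mp hmem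
      have hterm : ∀ m : Fin r →₀ ℕ, monomial m (hpoly.coeff m) ∈ R := by
        intro m
        by_cases hm : m = 0
        · subst hm
          rw [← C_apply]
          exact memC_polyAmalg A J r h0
        · exact mem_monomial_polyAmalg A J r hm (hJm m hm)
      have hsum : (⟨hpoly, hmem⟩ : ↥R) =
          ∑ m ∈ hpoly.support, (⟨monomial m (hpoly.coeff m), hterm m⟩ : ↥R) := by
        apply Subtype.ext
        show hpoly = ((∑ m ∈ hpoly.support,
          (⟨monomial m (hpoly.coeff m), hterm m⟩ : ↥R) : ↥R) : MvPolynomial (Fin r) B)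
        rw [AddSubmonoidClass.coe_finset_sum]
        exact (support_sum_monomial_coeff hpoly).symm
      rw [hsum]
      refine sum_mem ?_
      intro m _
      by_cases hm : m = 0
      · subst hm
        have : (⟨monomial 0 (hpoly.coeff 0), hterm 0⟩ : ↥R) =
            algebraMap ↥A ↥R ⟨hpoly.coeff 0, h0⟩ := by
          apply Subtype.ext
          show monomial 0 (hpoly.coeff 0) = ((ρ ⟨hpoly.coeff 0, h0⟩ : ↥R) : MvPolynomial (Fin r) B)
          rw [← C_apply]
          rfl
        rw [this]
        exact Subalgebra.algebraMap_mem _ _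
      · have hcoef : hpoly.coeff m ∈ Submodule.span ↥A (↑s : Set B) := by
          rw [hs]; exact hJm m hm
        have hspanmem : ∀ (j : B), j ∈ Submodule.span ↥A (↑s : Set B) →
            j ∈ J ∧ ∀ (hj : monomial m j ∈ R),
              (⟨monomial m j, hj⟩ : ↥R) ∈ Algebra.adjoin ↥A G := by
          intro j hjspan
          induction hjspan using Submodule.span_induction with
          | mem x hx =>
            refine ⟨hsJ x hx, fun hj => ?_⟩
            exact hgen (m.sum fun _ k => k) m hm le_rfl x hx
          | zero =>
            refine ⟨J.zero_mem, fun hj => ?_⟩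
            have : (⟨monomial m (0 : B), hj⟩ : ↥R) = 0 := Subtype.ext (by simp)
            rw [this]
            exact zero_mem _
          | add x y hx hy ihx ihy =>
            refine ⟨J.add_mem ihx.1 ihy.1, fun hj => ?_⟩
            have hx' : monomial m x ∈ R := mem_monomial_polyAmalg A J r hm ihx.1
            have hy' : monomial m y ∈ R := mem_monomial_polyAmalg A J r hm ihy.1
            have : (⟨monomial m (x + y), hj⟩ : ↥R) =
                (⟨monomial m x, hx'⟩ : ↥R) + ⟨monomial m y, hy'⟩ := by
              apply Subtype.ext
              show monomial m (x + y) = monomial m x + monomial m y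
              exact map_add (monomial m) x y
            rw [this]
            exact add_mem (ihx.2 hx') (ihy.2 hy')
          | smul a x hx ihx =>
            have haxJ : (a : ↥A) • x ∈ J := by
              show (a : B) * x ∈ J
              exact J.mul_mem_left _ ihx.1
            refine ⟨haxJ, fun hj => ?_⟩
            have hx' : monomial m x ∈ R := mem_monomial_polyAmalg A J r hm ihx.1
            have : (⟨monomial m (a • x), hj⟩ : ↥R) = a • (⟨monomial m x, hx'⟩ : ↥R) := by
              apply Subtype.ext
              show monomial m (a • x) = ((a • (⟨monomial m x, hx'⟩ : ↥R) : ↥R) :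
                MvPolynomial (Fin r) B)
              rw [Algebra.smul_def]
              show monomial m ((a : B) * x) =
                ((algebraMap ↥A ↥R a : ↥R) : MvPolynomial (Fin r) B) * monomial m x
              rw [show ((algebraMap ↥A ↥R a : ↥R) : MvPolynomial (Fin r) B) = C (a : B) from rfl,
                C_mul_monomial]
            rw [this]
            exact Subalgebra.smul_mem _ (ihx.2 hx') a
        exact (hspanmem _ hcoef).2 (hterm m)
    exact Algebra.FiniteType.isNoetherianRing ↥A ↥R
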